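/- arXiv:1502.05330 — 2 statements merged into one kernel-verified Lean document; each statement's English description precedes it below -/
import Mathlib

section
/- Let A_L = ∑_{i∈L} a_i be an additive operator on a subset L of the N-spin system (each a_i Hermitian, supported on spin i, with ‖a_i‖ ≤ 1), and let O be a q-local operator. Then for every real x, Π^A_{> x + 2q} · O · Π^A_{≤ x} = 0, where Π^A denote the spectral projectors of A_L. In particular, a q-local operator maps any eigenvector of A_L with eigenvalue a into the span of eigenvectors with eigenvalues a′ satisfying |a′ − a| ≤ 2q. -/
noncomputable section

open scoped ComplexConjugate

/-- The Hilbert space of `N` spins, each of local dimension `d`: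
the `N`-fold tensor product `⊗ ℂ^d`, realized as the space with orthonormal
basis indexed by configurations `Fin N → Fin d`. -/
abbrev SpinSpace (N d : ℕ) : Type := EuclideanSpace ℂ (Fin N → Fin d)

/-- Operators on the spin system. -/
abbrev SpinOp (N d : ℕ) : Type := SpinSpace N d →L[ℂ] SpinSpace N d

variable {N d : ℕ}

/-- The standard (computational) basis vector labelled by a configuration. -/
def basisVec (f : Fin N → Fin d) : SpinSpace N d := EuclideanSpace.single f 1

/-- The matrix entry `⟨f| A |g⟩` of an operator in the computational basis. -/
def matEntry (A : SpinOp N d) (f g : Fin N → Fin d) : ℂ :=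
  inner ℂ (basisVec f) (A (basisVec g))

/-- `A` is supported on the subset `X` of spins: under the tensor factorization
`ℋ ≅ ℋ_X ⊗ ℋ_{Xᶜ}` it has the form `o ⊗ I`.  Concretely: matrix entries vanish
unless the two configurations agree outside `X`, and entries depend only on the
restrictions of the configurations to `X`. -/
def SupportedOn (X : Finset (Fin N)) (A : SpinOp N d) : Prop :=
  (∀ f g : Fin N → Fin d, (∃ i, i ∉ X ∧ f i ≠ g i) → matEntry A f g = 0) ∧
  (∀ f g f' g' : Fin N → Fin d,
      (∀ i ∈ X, f i = f' i) → (∀ i ∈ X, g i = g' i) →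
      (∀ i, i ∉ X → f i = g i) → (∀ i, i ∉ X → f' i = g' i) →
      matEntry A f g = matEntry A f' g')

/-- A `q`-local operator: a sum of operators, each supported on at most `q` spins. -/
def IsLocalOp (q : ℕ) (A : SpinOp N d) : Prop :=
  ∃ (n : ℕ) (X : Fin n → Finset (Fin N)) (o : Fin n → SpinOp N d),
    (∀ t, (X t).card ≤ q ∧ SupportedOn (X t) (o t)) ∧ A = ∑ t, o t

/-- A `k`-local Hamiltonian with interaction strength `g`: a sum of Hermitian
terms, each supported on at most `k` spins, such that for every spin the total
norm of the terms acting on it is at most `g`. -/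
def IsKLocalHamiltonian (k : ℕ) (g : ℝ) (H : SpinOp N d) : Prop :=
  ∃ (n : ℕ) (X : Fin n → Finset (Fin N)) (h : Fin n → SpinOp N d),
    (∀ t, (X t).card ≤ k ∧ SupportedOn (X t) (h t) ∧ IsSelfAdjoint (h t)) ∧
    (∀ i : Fin N, ∑ t ∈ Finset.univ.filter (fun t => i ∈ X t), ‖h t‖ ≤ g) ∧
    H = ∑ t, h t

/-- An additive operator `A = ∑_{i ∈ L} a_i`, each `a_i` Hermitian, supported on
the single spin `i`, with `‖a_i‖ ≤ 1`. -/
def IsAdditiveOn (L : Finset (Fin N)) (a : Fin N → SpinOp N d) (A : SpinOp N d) : Prop :=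
  (∀ i ∈ L, SupportedOn {i} (a i) ∧ IsSelfAdjoint (a i) ∧ ‖a i‖ ≤ 1) ∧
  A = ∑ i ∈ L, a i

/-- The span of all eigenvectors of `A` whose (real) eigenvalue satisfies `P`. -/
def eigSpan (A : SpinOp N d) (P : ℝ → Prop) : Submodule ℂ (SpinSpace N d) :=
  ⨆ (a : ℝ) (_ : P a), Module.End.eigenspace (A : SpinSpace N d →ₗ[ℂ] SpinSpace N d) (a : ℂ)

/-- Spectral projector of `A` onto the eigenvalues satisfying `P` (the orthogonal
projection onto the span of the corresponding eigenvectors). -/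
def specProj (A : SpinOp N d) (P : ℝ → Prop) : SpinOp N d :=
  (eigSpan A P).subtypeL.comp ((eigSpan A P).orthogonalProjection)

/-- `m` is a median of `A` in the state `ψ`. -/
def IsMedian (A : SpinOp N d) (ψ : SpinSpace N d) (m : ℝ) : Prop :=
  (1:ℝ)/2 ≤ (inner ℂ ψ ((specProj A (fun a => a ≤ m)) ψ) : ℂ).re ∧
  (1:ℝ)/2 ≤ (inner ℂ ψ ((specProj A (fun a => m ≤ a)) ψ) : ℂ).re

/-- The state `ψ` satisfies the local-reversibility bound with function `f`. -/
def SatisfiesLR (f : ℝ → ℝ) (ψ : SpinSpace N d) : Prop :=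
  ∀ (L : Finset (Fin N)) (Γ : SpinOp N d), SupportedOn L Γ →
    (inner ℂ ψ (Γ ψ) : ℂ) ≠ 0 →
    ∀ q : ℕ, 0 < q →
      ∃ R : SpinOp N d, IsLocalOp q R ∧
        ‖R (Γ ψ) - ψ‖ ≤ ‖Γ‖ / ‖(inner ℂ ψ (Γ ψ) : ℂ)‖ * f ((q : ℝ) / Real.sqrt (L.card))

/-- `H` has ground energy `0` with unique normalized ground state `Ω` and spectral
gap (at least) `δE`: `Ω` is a null state, every null state is proportional to `Ω`,
and on the orthogonal complement of `Ω` the energy is at least `δE`. -/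
def IsGappedGround (H : SpinOp N d) (Ω : SpinSpace N d) (δE : ℝ) : Prop :=
  ‖Ω‖ = 1 ∧ H Ω = 0 ∧
  (∀ φ : SpinSpace N d, H φ = 0 → ∃ c : ℂ, φ = c • Ω) ∧
  (∀ φ : SpinSpace N d, (inner ℂ Ω φ : ℂ) = 0 → δE * ‖φ‖ ^ 2 ≤ (inner ℂ φ (H φ) : ℂ).re)

section QLSaux
variable {N d : ℕ}

lemma matEntry_eq_apply (A : SpinOp N d) (f g : Fin N → Fin d) :
    matEntry A f g = A (basisVec g) f := by
  simp [matEntry, basisVec, EuclideanSpace.inner_single_left]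

lemma expand (x : SpinSpace N d) : x = ∑ h, x h • basisVec h := by
  ext j
  rw [WithLp.ofLp_sum, Finset.sum_apply]
  simp [basisVec, EuclideanSpace.single_apply]

lemma apply_eq_sum (A : SpinOp N d) (x : SpinSpace N d) :
    A x = ∑ h, x h • A (basisVec h) := by
  conv_lhs => rw [expand x]
  rw [map_sum]
  simp

lemma op_ext {P Q : SpinOp N d} (h : ∀ f g, matEntry P f g = matEntry Q f g) : P = Q := by
  apply ContinuousLinearMap.ext
  intro x
  rw [apply_eq_sum P, apply_eq_sum Q]
  apply Finset.sum_congr rfl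
  intro g _
  have hg : P (basisVec g) = Q (basisVec g) := by
    ext f
    rw [← matEntry_eq_apply, ← matEntry_eq_apply]
    exact h f g
  rw [hg]

lemma matEntry_comp (P Q : SpinOp N d) (f g : Fin N → Fin d) :
    matEntry (P.comp Q) f g = ∑ h, matEntry Q h g * matEntry P f h := by
  rw [matEntry_eq_apply]
  simp only [ContinuousLinearMap.comp_apply]
  rw [apply_eq_sum P (Q (basisVec g))]
  rw [WithLp.ofLp_sum, Finset.sum_apply]
  congr 1
  funext h
  rw [matEntry_eq_apply, matEntry_eq_apply]
  simp

lemma commute_of_disjoint {X Y : Finset (Fin N)} {P Q : SpinOp N d}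
    (hP : SupportedOn X P) (hQ : SupportedOn Y Q) (hXY : Disjoint X Y) :
    P.comp Q = Q.comp P := by
  apply op_ext
  intro f g
  rw [matEntry_comp, matEntry_comp]
  by_cases hc : ∀ i, i ∉ X → i ∉ Y → f i = g i
  · classical
    set h0 : Fin N → Fin d := fun i => if i ∈ X then g i else f i with hh0
    set h1 : Fin N → Fin d := fun i => if i ∈ Y then g i else f i with hh1
    have hXnY : ∀ i ∈ X, i ∉ Y := fun i hi => Finset.disjoint_left.mp hXY hi
    have hYnX : ∀ i ∈ Y, i ∉ X := fun i hi => Finset.disjoint_right.mp hXY hi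
    have e1 : ∑ h, matEntry Q h g * matEntry P f h = matEntry Q h0 g * matEntry P f h0 := by
      apply Finset.sum_eq_single h0
      · intro h _ hne
        have : ∃ i, h i ≠ h0 i := by
          by_contra hcon
          push_neg at hcon
          exact hne (funext hcon)
        obtain ⟨i, hi⟩ := this
        by_cases hiX : i ∈ X
        · have : h i ≠ g i := by simpa [hh0, hiX] using hi
          rw [hQ.1 h g ⟨i, hXnY i hiX, this⟩, zero_mul]
        · have : f i ≠ h i := by
            simp only [hh0, hiX, if_neg] at hi
            exact fun hfe => hi hfe.symm
          rw [hP.1 f h ⟨i, hiX, this⟩, mul_zero]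
      · intro habs; exact absurd (Finset.mem_univ h0) habs
    have e2 : ∑ h, matEntry P h g * matEntry Q f h = matEntry P h1 g * matEntry Q f h1 := by
      apply Finset.sum_eq_single h1
      · intro h _ hne
        have : ∃ i, h i ≠ h1 i := by
          by_contra hcon
          push_neg at hcon
          exact hne (funext hcon)
        obtain ⟨i, hi⟩ := this
        by_cases hiY : i ∈ Y
        · have : h i ≠ g i := by simpa [hh1, hiY] using hi
          rw [hP.1 h g ⟨i, hYnX i hiY, this⟩, zero_mul]
        · have : f i ≠ h i := by
            simp only [hh1, hiY, if_neg] at hi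
            exact fun hfe => hi hfe.symm
          rw [hQ.1 f h ⟨i, hiY, this⟩, mul_zero]
      · intro habs; exact absurd (Finset.mem_univ h1) habs
    rw [e1, e2]
    have eP : matEntry P f h0 = matEntry P h1 g := by
      apply hP.2
      · intro i hiX; simp [hh1, hXnY i hiX]
      · intro i hiX; simp [hh0, hiX]
      · intro i hiX; simp [hh0, hiX]
      · intro i hiX
        by_cases hiY : i ∈ Y
        · simp [hh1, hiY]
        · simp [hh1, hiY, hc i hiX hiY]
    have eQ : matEntry Q h0 g = matEntry Q f h1 := by
      apply hQ.2
      · intro i hiY; simp [hh0, hYnX i hiY]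
      · intro i hiY; simp [hh1, hiY]
      · intro i hiY
        by_cases hiX : i ∈ X
        · simp [hh0, hiX]
        · simp [hh0, hiX, hc i hiX hiY]
      · intro i hiY; simp [hh1, hiY]
    rw [eP, eQ, mul_comm]
  · push_neg at hc
    obtain ⟨i, hiX, hiY, hfg⟩ := hc
    rw [Finset.sum_eq_zero, Finset.sum_eq_zero]
    · intro h _
      by_cases hf : f i = h i
      · have : h i ≠ g i := fun he => hfg (hf.trans he)
        rw [hP.1 h g ⟨i, hiX, this⟩, zero_mul]
      · rw [hQ.1 f h ⟨i, hiY, hf⟩, mul_zero]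
    · intro h _
      by_cases hf : f i = h i
      · have : h i ≠ g i := fun he => hfg (hf.trans he)
        rw [hQ.1 h g ⟨i, hiY, this⟩, zero_mul]
      · rw [hP.1 f h ⟨i, hiX, hf⟩, mul_zero]

lemma vanish {r s K t : ℝ} (hs : 0 ≤ s) (hrs : s < r) (ht : 0 ≤ t)
    (h : ∀ n : ℕ, r ^ n * t ≤ s ^ n * K) : t = 0 := by
  have hr : 0 < r := lt_of_le_of_lt hs hrs
  have key : ∀ n : ℕ, t ≤ (s / r) ^ n * K := by
    intro n
    have h2 := h n
    have hrn : 0 < r ^ n := pow_pos hr n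
    rw [div_pow, div_mul_eq_mul_div, le_div_iff₀ hrn, mul_comm t (r ^ n)]
    linarith [h n]
  have hlim : Filter.Tendsto (fun n : ℕ => (s / r) ^ n * K) Filter.atTop (nhds 0) := by
    have : Filter.Tendsto (fun n : ℕ => (s / r) ^ n) Filter.atTop (nhds 0) :=
      tendsto_pow_atTop_nhds_zero_of_lt_one (div_nonneg hs hr.le) ((div_lt_one hr).mpr hrs)
    simpa using this.mul_const K
  have := ge_of_tendsto' hlim key
  linarith

lemma commute_of_disjoint' {X Y : Finset (Fin N)} {P Q : SpinOp N d}
    (hP : SupportedOn X P) (hQ : SupportedOn Y Q) (hXY : Disjoint X Y) :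
    Commute P Q := by
  show P * Q = Q * P
  rw [ContinuousLinearMap.mul_def, ContinuousLinearMap.mul_def]
  exact commute_of_disjoint hP hQ hXY

set_option maxHeartbeats 1000000 in
lemma core (L : Finset (Fin N)) (a : Fin N → SpinOp N d) (A : SpinOp N d)
    (hA : IsAdditiveOn L a A) (q : ℕ) (o : SpinOp N d) (X : Finset (Fin N))
    (hcard : X.card ≤ q) (ho : SupportedOn X o)
    {t s : ℝ} (hts : 2 * q < s - t)
    {v w : SpinSpace N d} (hv : A v = (t : ℂ) • v) (hw : A w = (s : ℂ) • w) :
    (inner ℂ w (o v) : ℂ) = 0 := by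
  classical
  obtain ⟨ha, hAsum⟩ := hA
  set B : SpinOp N d := ∑ i ∈ L ∩ X, a i with hB
  set D : SpinOp N d := ∑ i ∈ L \ X, a i with hD
  have hBDsum : A = B + D := by
    rw [hAsum, hB, hD, Finset.sum_inter_add_sum_sdiff]
  have hDB : Commute D B := by
    apply Commute.sum_left
    intro i hi
    apply Commute.sum_right
    intro j hj
    have hij : i ≠ j := by
      intro hij
      rw [Finset.mem_sdiff] at hi
      rw [Finset.mem_inter] at hj
      exact hi.2 (hij ▸ hj.2)
    exact commute_of_disjoint' (ha i (Finset.mem_sdiff.mp hi).1).1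
      (ha j (Finset.mem_inter.mp hj).1).1 (by simp [Ne.symm hij, hij])
  have hDo : Commute D o := by
    apply Commute.sum_left
    intro i hi
    exact commute_of_disjoint' (ha i (Finset.mem_sdiff.mp hi).1).1 ho
      (by simp [(Finset.mem_sdiff.mp hi).2])
  have hBnorm : ‖B‖ ≤ (q : ℝ) := by
    calc ‖B‖ ≤ ∑ i ∈ L ∩ X, ‖a i‖ := norm_sum_le _ _
    _ ≤ ∑ i ∈ L ∩ X, 1 := by
        apply Finset.sum_le_sum
        intro i hi
        exact (ha i (Finset.mem_inter.mp hi).1).2.2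
    _ = ((L ∩ X).card : ℝ) := by simp
    _ ≤ (X.card : ℝ) := by
        exact_mod_cast Nat.cast_le.mpr (Finset.card_le_card (Finset.inter_subset_right))
    _ ≤ (q : ℝ) := by exact_mod_cast hcard
  have hAsa : IsSelfAdjoint A := by
    rw [hAsum]
    exact Finset.sum_induction a IsSelfAdjoint (fun x y hx hy => IsSelfAdjoint.add (R := SpinOp N d) hx hy)
      (IsSelfAdjoint.zero (SpinOp N d))
      (fun i hi => (ha i hi).2.1)
  have hsym := (ContinuousLinearMap.isSelfAdjoint_iff_isSymmetric).mp hAsa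
  set C : ℕ → SpinOp N d := fun n => (fun Z => B * Z - Z * B)^[n] o with hC
  have hC0 : C 0 = o := rfl
  have hCsucc : ∀ n, C (n + 1) = B * C n - C n * B := by
    intro n
    exact Function.iterate_succ_apply' (fun Z => B * Z - Z * B) n o
  have hDC : ∀ n, Commute D (C n) := by
    intro n
    induction n with
    | zero => exact hDo
    | succ n ih =>
      rw [hCsucc]
      exact (hDB.mul_right ih).sub_right (ih.mul_right hDB)
  have hCnorm : ∀ n, ‖C n‖ ≤ (2 * q) ^ n * ‖o‖ := by
    intro n
    induction n with
    | zero => rw [hC0, pow_zero, one_mul]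
    | succ n ih =>
      rw [hCsucc]
      have h1 : ‖B * C n - C n * B‖ ≤ ‖B‖ * ‖C n‖ + ‖C n‖ * ‖B‖ :=
        le_trans (norm_sub_le _ _) (add_le_add (norm_mul_le _ _) (norm_mul_le _ _))
      have hq : (0:ℝ) ≤ (q:ℝ) := Nat.cast_nonneg q
      have hCn : (0:ℝ) ≤ ‖C n‖ := norm_nonneg _
      have ho' : (0:ℝ) ≤ ‖o‖ := norm_nonneg _
      have h2 : ‖B‖ * ‖C n‖ + ‖C n‖ * ‖B‖ ≤ 2 * q * ‖C n‖ := by nlinarith [hBnorm]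
      have h3 : 2 * (q:ℝ) * ‖C n‖ ≤ 2 * q * ((2*q)^n * ‖o‖) := by nlinarith
      calc ‖B * C n - C n * B‖ ≤ 2 * q * ‖C n‖ := le_trans h1 h2
        _ ≤ 2 * q * ((2*q)^n * ‖o‖) := h3
        _ = (2*q)^(n+1) * ‖o‖ := by ring
  have hinner : ∀ n, (inner ℂ w (C n v) : ℂ) = ((s : ℂ) - t) ^ n * inner ℂ w (o v) := by
    intro n
    induction n with
    | zero => rw [hC0, pow_zero, one_mul]
    | succ n ih =>
      have hBv : B v = A v - D v := by rw [hBDsum]; simp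
      have happ : C (n+1) v = B (C n v) - C n (B v) := by
        rw [hCsucc]
        simp [ContinuousLinearMap.sub_apply, ContinuousLinearMap.mul_apply]
      have hDCn : D (C n v) = C n (D v) := by
        have := (hDC n).symm
        calc D (C n v) = (D * C n) v := rfl
          _ = (C n * D) v := by rw [hDC n]
          _ = C n (D v) := rfl
      have hBCn : (inner ℂ w (B (C n v)) : ℂ) = (s:ℂ) * inner ℂ w (C n v) - inner ℂ w (C n (D v)) := by
        have : B (C n v) = A (C n v) - D (C n v) := by rw [hBDsum]; simp
        rw [this, inner_sub_right, hDCn]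
        have hAw : (inner ℂ w (A (C n v)) : ℂ) = (s:ℂ) * inner ℂ w (C n v) := by
          have h := hsym w (C n v)
          simp only [ContinuousLinearMap.coe_coe] at h
          rw [← h, hw, inner_smul_left, Complex.conj_ofReal]
        rw [hAw]
      have hCBv : (inner ℂ w (C n (B v)) : ℂ) = (t:ℂ) * inner ℂ w (C n v) - inner ℂ w (C n (D v)) := by
        rw [hBv, hv]
        have : C n ((t:ℂ) • v - D v) = (t:ℂ) • C n v - C n (D v) := by
          rw [map_sub, map_smul]
        rw [this, inner_sub_right, inner_smul_right]
      rw [happ, inner_sub_right, hBCn, hCBv, ih]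
      ring
  -- conclude
  have habs : ∀ n : ℕ, (s - t) ^ n * ‖(inner ℂ w (o v) : ℂ)‖ ≤
      (2 * q) ^ n * (‖o‖ * ‖w‖ * ‖v‖) := by
    intro n
    have h1 : ‖(inner ℂ w (C n v) : ℂ)‖ ≤ ‖w‖ * (‖C n‖ * ‖v‖) := by
      calc ‖(inner ℂ w (C n v) : ℂ)‖ ≤ ‖w‖ * ‖C n v‖ := by
            simpa using norm_inner_le_norm (𝕜 := ℂ) w (C n v)
        _ ≤ ‖w‖ * (‖C n‖ * ‖v‖) := by
            have := (C n).le_opNorm v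
            have : ‖C n v‖ ≤ ‖C n‖ * ‖v‖ := this
            nlinarith [norm_nonneg w]
    have h2 : ‖(inner ℂ w (C n v) : ℂ)‖ = (s - t)^n * ‖(inner ℂ w (o v) : ℂ)‖ := by
      rw [hinner n]
      rw [norm_mul, norm_pow]
      congr 2
      have : ((s:ℂ) - t) = ((s - t : ℝ) : ℂ) := by push_cast; ring
      rw [this, Complex.norm_real, Real.norm_eq_abs, abs_of_nonneg]
      have hq : (0:ℝ) ≤ 2 * q := by positivity
      linarith
    rw [← h2]
    calc ‖(inner ℂ w (C n v) : ℂ)‖ ≤ ‖w‖ * (‖C n‖ * ‖v‖) := h1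
      _ ≤ ‖w‖ * (((2*q)^n * ‖o‖) * ‖v‖) := by
          apply mul_le_mul_of_nonneg_left _ (norm_nonneg w)
          exact mul_le_mul_of_nonneg_right (hCnorm n) (norm_nonneg v)
      _ = (2*q)^n * (‖o‖ * ‖w‖ * ‖v‖) := by ring
  have := vanish (r := s - t) (s := 2*q) (K := ‖o‖ * ‖w‖ * ‖v‖)
    (by positivity) hts (norm_nonneg _) habs
  exact norm_eq_zero.mp this

end QLSaux

theorem qlocal_eigenvalue_shift
    {N d : ℕ} (L : Finset (Fin N)) (a : Fin N → SpinOp N d) (A : SpinOp N d)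
    (hA : IsAdditiveOn L a A) (q : ℕ) (O : SpinOp N d) (hO : IsLocalOp q O)
    (x : ℝ) :
    (specProj A (fun t => x + 2 * q < t)).comp
      (O.comp (specProj A (fun t => t ≤ x))) = 0 := by
  classical
  obtain ⟨n, Xf, of, hof, hOsum⟩ := hO
  have key : ∀ (t : ℝ), t ≤ x → ∀ v : SpinSpace N d, A v = (t:ℂ) • v →
      ∀ (s : ℝ), x + 2*q < s → ∀ w : SpinSpace N d, A w = (s:ℂ) • w →
      (inner ℂ w (O v) : ℂ) = 0 := by
    intro t ht v hv s hs w hw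
    rw [hOsum]
    simp only [ContinuousLinearMap.sum_apply, inner_sum]
    apply Finset.sum_eq_zero
    intro u _
    exact core L a A hA q (of u) (Xf u) (hof u).1 (hof u).2 (by push_cast; linarith) hv hw
  have keyv : ∀ (t : ℝ), t ≤ x → ∀ v : SpinSpace N d, A v = (t:ℂ) • v →
      O v ∈ (eigSpan A (fun t => x + 2 * q < t))ᗮ := by
    intro t ht v hv
    rw [Submodule.mem_orthogonal]
    intro u hu
    have hspan : eigSpan A (fun t => x + 2 * q < t) ≤ (ℂ ∙ (O v))ᗮ := by
      apply iSup₂_le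
      intro s hs
      intro w hw
      rw [Module.End.mem_eigenspace_iff] at hw
      rw [Submodule.mem_orthogonal_singleton_iff_inner_right]
      rw [inner_eq_zero_symm]
      exact key t ht v hv s hs w hw
    have hu' := hspan hu
    rw [Submodule.mem_orthogonal_singleton_iff_inner_right] at hu'
    rw [inner_eq_zero_symm]
    exact hu'
  have lift : eigSpan A (fun t => t ≤ x) ≤
      Submodule.comap (O : SpinSpace N d →ₗ[ℂ] SpinSpace N d)
        ((eigSpan A (fun t => x + 2 * q < t))ᗮ) := by
    apply iSup₂_le
    intro t ht
    intro v hv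
    rw [Module.End.mem_eigenspace_iff] at hv
    rw [Submodule.mem_comap]
    exact keyv t ht v hv
  apply ContinuousLinearMap.ext
  intro ψ
  have hmem : specProj A (fun t => t ≤ x) ψ ∈ eigSpan A (fun t => t ≤ x) := by
    simp only [specProj, ContinuousLinearMap.comp_apply, Submodule.subtypeL_apply]
    exact ((eigSpan A (fun t => t ≤ x)).orthogonalProjection ψ).2
  have h2 : O (specProj A (fun t => t ≤ x) ψ) ∈ (eigSpan A (fun t => x + 2 * q < t))ᗮ :=
    Submodule.mem_comap.mp (lift hmem)
  have h3 := Submodule.orthogonalProjectionOnto_apply_of_mem_orthogonal h2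
  simp only [ContinuousLinearMap.comp_apply, ContinuousLinearMap.zero_apply]
  simp only [specProj, ContinuousLinearMap.comp_apply, Submodule.subtypeL_apply] at h3 ⊢
  rw [h3]
  simp
end
end

section
/- There is a constant C depending only on g and k with the following property. Let H be a k-local Hamiltonian with interaction strength g on the N-spin system, with ground energy 0, unique normalized ground state |Ω⟩, and spectral gap δE > 0. Then for every subset of spins L with δE ≤ g|L| and every additive operator A_L on L, the spectral gap and the ground-state fluctuation satisfy the trade-off δE · (⟨Ω|A_L²|Ω⟩ − ⟨Ω|A_L|Ω⟩²) ≤ C·|L|. -/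
noncomputable section

open scoped ComplexConjugate

variable {N d : ℕ}

set_option maxHeartbeats 1000000

namespace GFT

lemma inner_basisVec_apply (f : Fin N → Fin d) (v : SpinSpace N d) :
    (inner ℂ (basisVec f) v : ℂ) = v f := by
  simp [basisVec, EuclideanSpace.inner_single_left]

lemma matEntry_apply (A : SpinOp N d) (f g : Fin N → Fin d) :
    matEntry A f g = A (basisVec g) f := inner_basisVec_apply f _

lemma expand_basis (v : SpinSpace N d) : v = ∑ m, v m • basisVec m := by
  ext f
  have : (∑ m, v m • basisVec m) f = ∑ m, (v m • basisVec m) f := by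
    rw [WithLp.ofLp_sum]; exact Finset.sum_apply f Finset.univ _
  rw [this]
  simp [basisVec, EuclideanSpace.single_apply]

lemma op_ext {A B : SpinOp N d} (h : ∀ f g, matEntry A f g = matEntry B f g) : A = B := by
  have hb : ∀ m, A (basisVec m) = B (basisVec m) := by
    intro m
    ext f
    have := h f m
    rwa [matEntry_apply, matEntry_apply] at this
  ext v
  conv_lhs => rw [expand_basis v]
  conv_rhs => rw [expand_basis v]
  simp only [map_sum, map_smul, hb]

lemma matEntry_mul (A B : SpinOp N d) (f g : Fin N → Fin d) :
    matEntry (A * B) f g = ∑ m, matEntry A f m * matEntry B m g := by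
  rw [matEntry_apply]
  have h1 : (A * B) (basisVec g) = A (B (basisVec g)) := rfl
  rw [h1]
  conv_lhs => rw [expand_basis (B (basisVec g)), map_sum]
  rw [WithLp.ofLp_sum, Finset.sum_apply f Finset.univ _]
  refine Finset.sum_congr rfl fun m _ => ?_
  rw [map_smul]
  simp [matEntry_apply, mul_comm]

lemma commute_of_disjoint {X Y : Finset (Fin N)} {A B : SpinOp N d}
    (hXY : Disjoint X Y) (hA : SupportedOn X A) (hB : SupportedOn Y B) :
    A * B = B * A := by
  classical
  have hXY1 : ∀ i, i ∈ X → i ∉ Y := fun i hx hy => Finset.disjoint_left.mp hXY hx hy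
  have hXY2 : ∀ i, i ∈ Y → i ∉ X := fun i hy hx => Finset.disjoint_left.mp hXY hx hy
  apply op_ext
  intro f g
  rw [matEntry_mul, matEntry_mul]
  by_cases hfg : ∀ i, i ∉ X → i ∉ Y → f i = g i
  · set m0 : Fin N → Fin d := fun i => if i ∈ X then g i else f i with hm0
    set m1 : Fin N → Fin d := fun i => if i ∈ X then f i else g i with hm1
    have h0 : ∀ m ∈ Finset.univ, m ≠ m0 → matEntry A f m * matEntry B m g = 0 := by
      intro m _ hm
      obtain ⟨i, hi⟩ := Function.ne_iff.mp hm
      by_cases hiX : i ∈ X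
      · have : m0 i = g i := by simp [hm0, hiX]
        rw [hB.1 m g ⟨i, hXY1 i hiX, fun h => hi (h.trans this.symm)⟩, mul_zero]
      · have : m0 i = f i := by simp [hm0, hiX]
        rw [hA.1 f m ⟨i, hiX, fun h => hi (this.symm ▸ h.symm ▸ rfl)⟩, zero_mul]
    have h1 : ∀ m ∈ Finset.univ, m ≠ m1 → matEntry B f m * matEntry A m g = 0 := by
      intro m _ hm
      obtain ⟨i, hi⟩ := Function.ne_iff.mp hm
      by_cases hiX : i ∈ X
      · have : m1 i = f i := by simp [hm1, hiX]
        rw [hB.1 f m ⟨i, hXY1 i hiX, fun h => hi (this.symm ▸ h.symm ▸ rfl)⟩, zero_mul]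
      · have : m1 i = g i := by simp [hm1, hiX]
        rw [hA.1 m g ⟨i, hiX, fun h => hi (h.trans this.symm)⟩, mul_zero]
    rw [Finset.sum_eq_single m0 h0 (by simp), Finset.sum_eq_single m1 h1 (by simp)]
    have e1 : matEntry A f m0 = matEntry A m1 g := by
      apply hA.2
      · intro i hi; simp [hm1, hi]
      · intro i hi; simp [hm0, hi]
      · intro i hi; simp [hm0, hi]
      · intro i hi; simp [hm1, hi]
    have e2 : matEntry B m0 g = matEntry B f m1 := by
      apply hB.2
      · intro i hi; simp [hm0, hXY2 i hi]
      · intro i hi; simp [hm1, hXY2 i hi]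
      · intro i hi
        by_cases hiX : i ∈ X
        · simp [hm0, hiX]
        · simp [hm0, hiX, hfg i hiX hi]
      · intro i hi
        by_cases hiX : i ∈ X
        · simp [hm1, hiX]
        · simp [hm1, hiX, hfg i hiX hi]
    rw [e1, e2, mul_comm]
  · push_neg at hfg
    obtain ⟨i, hiX, hiY, hne⟩ := hfg
    rw [Finset.sum_eq_zero, Finset.sum_eq_zero]
    · intro m _
      by_cases hm : m i = g i
      · rw [hB.1 f m ⟨i, hiY, fun h => hne (h.trans hm)⟩, zero_mul]
      · rw [hA.1 m g ⟨i, hiX, hm⟩, mul_zero]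
    · intro m _
      by_cases hm : m i = f i
      · rw [hB.1 m g ⟨i, hiY, fun h => hne (hm.symm.trans h)⟩, mul_zero]
      · rw [hA.1 f m ⟨i, hiX, fun h => hm h.symm⟩, zero_mul]

end GFT

lemma comm_reduce {R : Type*} [Ring R] (b c h : R) (hch : Commute c h) (hcb : Commute c b) :
    (b + c) * (h * (b + c) - (b + c) * h) - (h * (b + c) - (b + c) * h) * (b + c)
      = b * (h * b - b * h) - (h * b - b * h) * b := by
  have he : h * (b + c) - (b + c) * h = h * b - b * h := by
    have h1 : h * c = c * h := hch.symm.eq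
    rw [mul_add, add_mul, h1]; abel
  rw [he]
  have hce : Commute c (h * b - b * h) :=
    (hch.mul_right hcb).sub_right (hcb.mul_right hch)
  have h2 : c * (h * b - b * h) = (h * b - b * h) * c := hce.eq
  rw [add_mul, mul_add, h2]; abel


lemma GFT_sa_sum {E : Type*} [NormedAddCommGroup E] [InnerProductSpace ℂ E] [CompleteSpace E]
    {ι : Type*} (L : Finset ι) (a : ι → E →L[ℂ] E) (h : ∀ i ∈ L, IsSelfAdjoint (a i)) :
    IsSelfAdjoint (∑ i ∈ L, a i) := by
  have : star (∑ i ∈ L, a i) = ∑ i ∈ L, a i := by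
    rw [star_sum]
    exact Finset.sum_congr rfl fun i hi => h i hi
  exact this


open GFT

theorem gap_fluctuation_tradeoff
    (g : ℝ) (k : ℕ) (hg : 0 < g) (hk : 0 < k) :
    ∃ C : ℝ, ∀ (N d : ℕ) (H : SpinOp N d) (δE : ℝ),
      IsKLocalHamiltonian k g H → 0 < δE →
      ∀ Ω : SpinSpace N d, IsGappedGround H Ω δE →
      ∀ L : Finset (Fin N), δE ≤ g * L.card →
      ∀ (a : Fin N → SpinOp N d) (A : SpinOp N d), IsAdditiveOn L a A →
        δE * ((inner ℂ Ω (A (A Ω)) : ℂ).re - ((inner ℂ Ω (A Ω) : ℂ).re) ^ 2) ≤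
          C * L.card := by
  classical
  refine ⟨2 * (k : ℝ) * g, ?_⟩
  rintro N d H δE ⟨n, X, h, hloc, hstr, hHsum⟩ hδE Ω ⟨hΩ1, hΩ0, -, hgap⟩ L hLg a A ⟨ha, hAsum⟩
  -- self-adjointness
  have hAsa : IsSelfAdjoint A := by
    rw [hAsum]; exact GFT_sa_sum L a fun i hi => (ha i hi).2.1
  have hHsa : IsSelfAdjoint H := by
    rw [hHsum]; exact GFT_sa_sum Finset.univ h fun t _ => (hloc t).2.2
  have swapA : ∀ x y : SpinSpace N d, (inner ℂ (A x) y : ℂ) = inner ℂ x (A y) := fun x y => by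
    conv_lhs => rw [← hAsa.adjoint_eq]
    exact ContinuousLinearMap.adjoint_inner_left A y x
  have swapH : ∀ x y : SpinSpace N d, (inner ℂ (H x) y : ℂ) = inner ℂ x (H y) := fun x y => by
    conv_lhs => rw [← hHsa.adjoint_eq]
    exact ContinuousLinearMap.adjoint_inner_left H y x
  set c : ℂ := inner ℂ Ω (A Ω) with hc
  have hcc : (starRingEnd ℂ) c = c := by
    rw [hc, inner_conj_symm, swapA]
  have hΩΩ : (inner ℂ Ω Ω : ℂ) = 1 := by
    rw [inner_self_eq_norm_sq_to_K, hΩ1]; norm_num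
  set φ : SpinSpace N d := A Ω - c • Ω with hφ
  have hφorth : (inner ℂ Ω φ : ℂ) = 0 := by
    rw [hφ, inner_sub_right, inner_smul_right, hΩΩ, mul_one, ← hc, sub_self]
  have hAΩΩ : (inner ℂ (A Ω) Ω : ℂ) = c := by rw [swapA, ← hc]
  -- variance equals ‖φ‖²
  have hvar : (inner ℂ Ω (A (A Ω)) : ℂ).re - ((inner ℂ Ω (A Ω) : ℂ).re) ^ 2 = ‖φ‖ ^ 2 := by
    have h1 : (inner ℂ φ φ : ℂ) = inner ℂ Ω (A (A Ω)) - c ^ 2 := by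
      rw [hφ, inner_sub_left, inner_sub_right, inner_sub_right, inner_smul_left,
        inner_smul_right, inner_smul_right, inner_smul_left, hΩΩ, hAΩΩ, hcc,
        swapA Ω (A Ω), ← hc]
      ring
    have h2 : ‖φ‖ ^ 2 = (inner ℂ φ φ : ℂ).re := (inner_self_eq_norm_sq (𝕜 := ℂ) φ).symm
    have hcre : c = ((c.re : ℝ) : ℂ) := (Complex.conj_eq_iff_re.mp hcc).symm
    rw [h2, h1, Complex.sub_re, ← hc]
    have h3 : (c ^ 2).re = c.re ^ 2 := by
      conv_lhs => rw [hcre]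
      rw [← Complex.ofReal_pow, Complex.ofReal_re]
    rw [h3]
  -- gap inequality
  have hφH : H φ = H (A Ω) := by rw [hφ, map_sub, map_smul, hΩ0, smul_zero, sub_zero]
  have hΩHA : (inner ℂ Ω (H (A Ω)) : ℂ) = 0 := by
    rw [← swapH Ω (A Ω), hΩ0, inner_zero_left]
  have hgap' : δE * ‖φ‖ ^ 2 ≤ (inner ℂ (A Ω) (H (A Ω)) : ℂ).re := by
    have hgφ := hgap φ hφorth
    rw [hφH] at hgφ
    refine hgφ.trans (le_of_eq ?_)
    rw [hφ, inner_sub_left, inner_smul_left, hΩHA, mul_zero, sub_zero]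
  -- double commutator
  set E : SpinOp N d := H * A - A * H with hE
  set D : SpinOp N d := A * E - E * A with hD
  have hDΩ : (inner ℂ Ω (D Ω) : ℂ) = 2 * inner ℂ (A Ω) (H (A Ω)) := by
    have hexp : D Ω = A (H (A Ω)) - (H (A (A Ω)) - A (H (A Ω))) := by
      have e1 : D Ω = A (E Ω) - E (A Ω) := rfl
      have e2 : E Ω = H (A Ω) - A (H Ω) := rfl
      have e3 : E (A Ω) = H (A (A Ω)) - A (H (A Ω)) := rfl
      rw [e1, e2, e3, hΩ0, map_zero, sub_zero]
    rw [hexp, inner_sub_right, inner_sub_right, ← swapA Ω (H (A Ω))]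
    have h3 : (inner ℂ Ω (H (A (A Ω))) : ℂ) = 0 := by
      rw [← swapH Ω (A (A Ω)), hΩ0, inner_zero_left]
    rw [h3]
    ring
  -- decomposition of D as a sum of local double commutators
  have hEsum : E = ∑ t, (h t * A - A * h t) := by
    rw [hE, hHsum, Finset.sum_mul, Finset.mul_sum, ← Finset.sum_sub_distrib]
  have hDsum : D = ∑ t, (A * (h t * A - A * h t) - (h t * A - A * h t) * A) := by
    rw [hD, hEsum, Finset.mul_sum, Finset.sum_mul, ← Finset.sum_sub_distrib]
  set B : Fin n → SpinOp N d := fun t => ∑ i ∈ L.filter (· ∈ X t), a i with hB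
  have hterm : ∀ t, A * (h t * A - A * h t) - (h t * A - A * h t) * A
      = B t * (h t * B t - B t * h t) - (h t * B t - B t * h t) * B t := by
    intro t
    set Ct : SpinOp N d := ∑ i ∈ L.filter (fun i => i ∉ X t), a i with hCt
    have hsplit : A = B t + Ct := by
      rw [hAsum, hB, hCt, Finset.sum_filter_add_sum_filter_not]
    have hch : Commute Ct (h t) := by
      apply Commute.sum_left
      intro i hi
      simp only [Finset.mem_filter] at hi
      exact commute_of_disjoint (Finset.disjoint_singleton_left.mpr hi.2)
        (ha i hi.1).1 (hloc t).2.1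
    have hcb : Commute Ct (B t) := by
      apply Commute.sum_left
      intro i hi
      apply Commute.sum_right
      intro j hj
      simp only [Finset.mem_filter] at hi hj
      have hij : i ≠ j := fun e => hi.2 (e ▸ hj.2)
      exact commute_of_disjoint (Finset.disjoint_singleton.mpr hij)
        (ha i hi.1).1 (ha j hj.1).1
    rw [hsplit]
    exact comm_reduce (B t) Ct (h t) hch hcb
  -- norm bounds
  have hBnorm : ∀ t, ‖B t‖ ≤ ((L.filter (· ∈ X t)).card : ℝ) := by
    intro t
    refine (norm_sum_le _ _).trans ?_
    calc ∑ i ∈ L.filter (· ∈ X t), ‖a i‖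
        ≤ ∑ _i ∈ L.filter (· ∈ X t), (1:ℝ) :=
          Finset.sum_le_sum fun i hi => (ha i (Finset.mem_filter.mp hi).1).2.2
      _ = ((L.filter (· ∈ X t)).card : ℝ) := by simp
  have hcard_k : ∀ t, ((L.filter (· ∈ X t)).card : ℝ) ≤ (k : ℝ) := by
    intro t
    have hsub : L.filter (· ∈ X t) ⊆ X t := fun i hi => (Finset.mem_filter.mp hi).2
    exact_mod_cast (Finset.card_le_card hsub).trans (hloc t).1
  have hDt_norm : ∀ t, ‖B t * (h t * B t - B t * h t) - (h t * B t - B t * h t) * B t‖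
      ≤ 4 * (k : ℝ) * (((L.filter (· ∈ X t)).card : ℝ) * ‖h t‖) := by
    intro t
    have hb := hBnorm t
    have hkk := hcard_k t
    have hb0 : (0:ℝ) ≤ ‖B t‖ := norm_nonneg _
    have hh0 : (0:ℝ) ≤ ‖h t‖ := norm_nonneg _
    have he : ‖h t * B t - B t * h t‖ ≤ 2 * ‖h t‖ * ‖B t‖ := by
      refine (norm_sub_le _ _).trans ?_
      have u1 := norm_mul_le (h t) (B t)
      have u2 := norm_mul_le (B t) (h t)
      nlinarith
    calc ‖B t * (h t * B t - B t * h t) - (h t * B t - B t * h t) * B t‖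
        ≤ ‖B t * (h t * B t - B t * h t)‖ + ‖(h t * B t - B t * h t) * B t‖ :=
          norm_sub_le _ _
      _ ≤ ‖B t‖ * ‖h t * B t - B t * h t‖ + ‖h t * B t - B t * h t‖ * ‖B t‖ := by
          have u1 := norm_mul_le (B t) (h t * B t - B t * h t)
          have u2 := norm_mul_le (h t * B t - B t * h t) (B t)
          linarith
      _ ≤ 4 * (k : ℝ) * (((L.filter (· ∈ X t)).card : ℝ) * ‖h t‖) := by
          nlinarith [mul_le_mul_of_nonneg_left he hb0,
            mul_le_mul (hb.trans hkk) hb hb0 (Nat.cast_nonneg k), hh0, hb0,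
            norm_nonneg (h t * B t - B t * h t)]
  have hsum_bound : ∑ t, ((L.filter (· ∈ X t)).card : ℝ) * ‖h t‖ ≤ g * L.card := by
    have hone : ∀ t, ((L.filter (· ∈ X t)).card : ℝ) * ‖h t‖
        = ∑ i ∈ L, (if i ∈ X t then ‖h t‖ else 0) := by
      intro t
      rw [← Finset.sum_filter, Finset.sum_const, nsmul_eq_mul]
    calc ∑ t, ((L.filter (· ∈ X t)).card : ℝ) * ‖h t‖
        = ∑ t, ∑ i ∈ L, (if i ∈ X t then ‖h t‖ else 0) :=
          Finset.sum_congr rfl fun t _ => hone t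
      _ = ∑ i ∈ L, ∑ t, (if i ∈ X t then ‖h t‖ else 0) := Finset.sum_comm
      _ ≤ ∑ _i ∈ L, g := by
          refine Finset.sum_le_sum fun i _ => ?_
          rw [← Finset.sum_filter]
          exact hstr i
      _ = g * L.card := by rw [Finset.sum_const, nsmul_eq_mul, mul_comm]
  have hDnorm : ‖D‖ ≤ 4 * (k : ℝ) * (g * L.card) := by
    rw [hDsum]
    refine (norm_sum_le _ _).trans ?_
    have step : ∑ t, ‖A * (h t * A - A * h t) - (h t * A - A * h t) * A‖
        ≤ ∑ t, 4 * (k : ℝ) * (((L.filter (· ∈ X t)).card : ℝ) * ‖h t‖) := by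
      refine Finset.sum_le_sum fun t _ => ?_
      rw [hterm t]; exact hDt_norm t
    refine step.trans ?_
    rw [← Finset.mul_sum]
    have hk0 : (0:ℝ) ≤ 4 * (k : ℝ) := by positivity
    exact mul_le_mul_of_nonneg_left hsum_bound hk0
  -- conclusion
  rw [hvar]
  have hre : (inner ℂ (A Ω) (H (A Ω)) : ℂ).re ≤ 2 * (k : ℝ) * g * L.card := by
    have h2 : (2:ℝ) * (inner ℂ (A Ω) (H (A Ω)) : ℂ).re = (inner ℂ Ω (D Ω) : ℂ).re := by
      rw [hDΩ]
      simp [Complex.mul_re]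
    have hle : (inner ℂ Ω (D Ω) : ℂ).re ≤ ‖D‖ := by
      refine (Complex.re_le_norm _).trans ?_
      have h4 : ‖(inner ℂ Ω (D Ω) : ℂ)‖ ≤ ‖Ω‖ * ‖D Ω‖ := norm_inner_le_norm Ω (D Ω)
      have h5 : ‖D Ω‖ ≤ ‖D‖ * ‖Ω‖ := D.le_opNorm Ω
      rw [hΩ1, one_mul] at h4
      rw [hΩ1, mul_one] at h5
      exact h4.trans h5
    nlinarith
  exact hgap'.trans hre
end
end
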